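/- arXiv:1603.07880 — 9 statements merged into one kernel-verified Lean document; each statement's English description precedes it below -/
import Mathlib

section
/- Let X be a complex Banach space, T a bounded linear operator on X, and (M,N) closed T-invariant subspaces with X = M ⊕ N. Then T has finite descent if and only if both T_M and T_N have finite descent, and in that case dsc(T) = max{dsc(T_M), dsc(T_N)}. -/
open Filter Topology

noncomputable def clmRestrict {X : Type*} [NormedAddCommGroup X] [NormedSpace ℂ X]
    (T : X →L[ℂ] X) (M : Submodule ℂ X) (h : ∀ x ∈ M, T x ∈ M) : M →L[ℂ] M :=
  { toLinearMap := (T : X →ₗ[ℂ] X).restrict h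
    cont := by
      apply Continuous.subtype_mk
      exact T.continuous.comp continuous_subtype_val }

section aux

variable {V : Type*} [AddCommGroup V] [Module ℂ V]

lemma range_pow_succ_le (f : V →ₗ[ℂ] V) (n : ℕ) :
    LinearMap.range (f ^ (n + 1)) ≤ LinearMap.range (f ^ n) := by
  rw [pow_succ, Module.End.mul_eq_comp]
  exact LinearMap.range_comp_le_range _ _

lemma range_stab (f : V →ₗ[ℂ] V) {n m : ℕ} (hnm : n ≤ m)
    (h : LinearMap.range (f ^ n) = LinearMap.range (f ^ (n + 1))) :
    LinearMap.range (f ^ m) = LinearMap.range (f ^ (m + 1)) := by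
  induction m, hnm using Nat.le_induction with
  | base => exact h
  | succ m hm ih =>
    have h1 : f ^ (m + 1) = f ∘ₗ f ^ m := by rw [pow_succ']; rfl
    have h2 : f ^ (m + 2) = f ∘ₗ f ^ (m + 1) := by rw [pow_succ']; rfl
    rw [h1, h2, LinearMap.range_comp, LinearMap.range_comp, ih]

lemma map_range_restrict (f : V →ₗ[ℂ] V) (p : Submodule ℂ V) (h : ∀ x ∈ p, f x ∈ p) :
    (LinearMap.range (f.restrict h)).map p.subtype = p.map f := by
  ext y
  simp only [Submodule.mem_map, LinearMap.mem_range, Submodule.coe_subtype]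
  constructor
  · rintro ⟨z, ⟨x, hx⟩, rfl⟩
    exact ⟨x, x.2, congrArg Subtype.val hx⟩
  · rintro ⟨x, hxp, hfx⟩
    exact ⟨⟨y, hfx ▸ h x hxp⟩, ⟨⟨x, hxp⟩, Subtype.ext hfx⟩, rfl⟩

end aux

/-- Finite descent iff both restrictions have finite descent, and then the
descent is the max of the two descents. -/
theorem stmt_5 {X : Type*} [NormedAddCommGroup X] [NormedSpace ℂ X] [CompleteSpace X]
    (T : X →L[ℂ] X) (M N : Submodule ℂ X)
    (hMc : IsClosed (M : Set X)) (hNc : IsClosed (N : Set X))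
    (hM : ∀ x ∈ M, T x ∈ M) (hN : ∀ x ∈ N, T x ∈ N)
    (hcompl : IsCompl M N) :
    ((∃ n : ℕ, LinearMap.range ((T ^ n : X →L[ℂ] X) : X →ₗ[ℂ] X) = LinearMap.range ((T ^ (n + 1) : X →L[ℂ] X) : X →ₗ[ℂ] X)) ↔
      ((∃ n : ℕ, LinearMap.range (((clmRestrict T M hM) ^ n : ↥M →L[ℂ] ↥M) : ↥M →ₗ[ℂ] ↥M) =
          LinearMap.range (((clmRestrict T M hM) ^ (n + 1) : ↥M →L[ℂ] ↥M) : ↥M →ₗ[ℂ] ↥M)) ∧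
       (∃ n : ℕ, LinearMap.range (((clmRestrict T N hN) ^ n : ↥N →L[ℂ] ↥N) : ↥N →ₗ[ℂ] ↥N) =
          LinearMap.range (((clmRestrict T N hN) ^ (n + 1) : ↥N →L[ℂ] ↥N) : ↥N →ₗ[ℂ] ↥N)))) ∧
    ((∃ n : ℕ, LinearMap.range ((T ^ n : X →L[ℂ] X) : X →ₗ[ℂ] X) = LinearMap.range ((T ^ (n + 1) : X →L[ℂ] X) : X →ₗ[ℂ] X)) →
      sInf {n : ℕ | LinearMap.range ((T ^ n : X →L[ℂ] X) : X →ₗ[ℂ] X) = LinearMap.range ((T ^ (n + 1) : X →L[ℂ] X) : X →ₗ[ℂ] X)} =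
        max (sInf {n : ℕ | LinearMap.range (((clmRestrict T M hM) ^ n : ↥M →L[ℂ] ↥M) : ↥M →ₗ[ℂ] ↥M) =
              LinearMap.range (((clmRestrict T M hM) ^ (n + 1) : ↥M →L[ℂ] ↥M) : ↥M →ₗ[ℂ] ↥M)})
            (sInf {n : ℕ | LinearMap.range (((clmRestrict T N hN) ^ n : ↥N →L[ℂ] ↥N) : ↥N →ₗ[ℂ] ↥N) =
              LinearMap.range (((clmRestrict T N hN) ^ (n + 1) : ↥N →L[ℂ] ↥N) : ↥N →ₗ[ℂ] ↥N)})) := by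
  set g : X →ₗ[ℂ] X := (T : X →ₗ[ℂ] X) with hg
  set fM : M →ₗ[ℂ] M := g.restrict hM with hfM
  set fN : N →ₗ[ℂ] N := g.restrict hN with hfN
  -- identify ranges of CLM powers with ranges of linear map powers
  have crT : ∀ n : ℕ, LinearMap.range ((T ^ n : X →L[ℂ] X) : X →ₗ[ℂ] X) = LinearMap.range (g ^ n) := by
    intro n
    ext x
    simp only [LinearMap.mem_range]
    constructor <;> rintro ⟨y, rfl⟩ <;> exact ⟨y, by
      simp [ContinuousLinearMap.coe_pow, Module.End.pow_apply, hg]⟩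
  have crM : ∀ n : ℕ, LinearMap.range (((clmRestrict T M hM) ^ n : ↥M →L[ℂ] ↥M) : ↥M →ₗ[ℂ] ↥M) =
      LinearMap.range (fM ^ n) := by
    intro n
    ext x
    simp only [LinearMap.mem_range]
    constructor <;> rintro ⟨y, rfl⟩ <;> exact ⟨y, by
      simp [ContinuousLinearMap.coe_pow, Module.End.pow_apply, clmRestrict, hfM, hg]⟩
  have crN : ∀ n : ℕ, LinearMap.range (((clmRestrict T N hN) ^ n : ↥N →L[ℂ] ↥N) : ↥N →ₗ[ℂ] ↥N) =
      LinearMap.range (fN ^ n) := by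
    intro n
    ext x
    simp only [LinearMap.mem_range]
    constructor <;> rintro ⟨y, rfl⟩ <;> exact ⟨y, by
      simp [ContinuousLinearMap.coe_pow, Module.End.pow_apply, clmRestrict, hfN, hg]⟩
  -- decomposition of ranges
  have key : ∀ n : ℕ, LinearMap.range (g ^ n) =
      (LinearMap.range (fM ^ n)).map M.subtype ⊔ (LinearMap.range (fN ^ n)).map N.subtype := by
    intro n
    rw [hfM, hfN, Module.End.pow_restrict, Module.End.pow_restrict,
      map_range_restrict, map_range_restrict, LinearMap.range_eq_map,
      ← hcompl.sup_eq_top, Submodule.map_sup]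
  -- equivalence at each level
  have eqiff : ∀ n : ℕ,
      (LinearMap.range (g ^ n) = LinearMap.range (g ^ (n + 1))) ↔
      ((LinearMap.range (fM ^ n) = LinearMap.range (fM ^ (n + 1))) ∧
       (LinearMap.range (fN ^ n) = LinearMap.range (fN ^ (n + 1)))) := by
    intro n
    constructor
    · intro h
      rw [key n, key (n + 1)] at h
      have hinjM := Submodule.map_injective_of_injective (Submodule.injective_subtype M)
      have hinjN := Submodule.map_injective_of_injective (Submodule.injective_subtype N)
      have hsplit : ∀ (p q : Submodule ℂ X) (A A' B B' : Submodule ℂ X),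
          Disjoint p q → A ≤ p → A' ≤ A → B ≤ q → B' ≤ B →
          A ⊔ B ≤ A' ⊔ B' → A ≤ A' := by
        intro p q A A' B B' hd hAp hA'A hBq hB'B hle
        intro a ha
        obtain ⟨a', ha', b', hb', hab⟩ := Submodule.mem_sup.mp (hle (le_sup_left (b := B) ha))
        have hb'M : b' ∈ p := by
          have : b' = a - a' := by rw [← hab]; abel
          rw [this]
          exact sub_mem (hAp ha) (hAp (hA'A ha'))
        have : b' = 0 := (Submodule.disjoint_def.mp hd) b' hb'M (hBq (hB'B hb')) 
        rw [← hab, this, add_zero]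
        exact ha'
      have hMle : (LinearMap.range (fM ^ n)).map M.subtype ≤
          (LinearMap.range (fM ^ (n + 1))).map M.subtype :=
        hsplit M N _ _ _ _ hcompl.disjoint (Submodule.map_subtype_le _ _)
          (Submodule.map_mono (range_pow_succ_le fM n)) (Submodule.map_subtype_le _ _)
          (Submodule.map_mono (range_pow_succ_le fN n)) h.le
      have hNle : (LinearMap.range (fN ^ n)).map N.subtype ≤
          (LinearMap.range (fN ^ (n + 1))).map N.subtype := by
        refine hsplit N M _ _ _ _ hcompl.disjoint.symm (Submodule.map_subtype_le _ _)
          (Submodule.map_mono (range_pow_succ_le fN n)) (Submodule.map_subtype_le _ _)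
          (Submodule.map_mono (range_pow_succ_le fM n)) ?_
        rw [sup_comm, h, sup_comm]
      exact ⟨hinjM (le_antisymm (Submodule.map_mono (range_pow_succ_le fM n)) hMle).symm,
        hinjN (le_antisymm (Submodule.map_mono (range_pow_succ_le fN n)) hNle).symm⟩
    · rintro ⟨h1, h2⟩
      rw [key n, key (n + 1), h1, h2]
  simp only [crT, crM, crN, eqiff]
  constructor
  · constructor
    · rintro ⟨n, h1, h2⟩; exact ⟨⟨n, h1⟩, ⟨n, h2⟩⟩
    · rintro ⟨⟨a, ha⟩, ⟨b, hb⟩⟩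
      exact ⟨max a b, range_stab fM (le_max_left a b) ha,
        range_stab fN (le_max_right a b) hb⟩
  · rintro ⟨n, hn⟩
    have hS : {m : ℕ | LinearMap.range (fM ^ m) = LinearMap.range (fM ^ (m + 1)) ∧
        LinearMap.range (fN ^ m) = LinearMap.range (fN ^ (m + 1))}.Nonempty := ⟨n, hn⟩
    set SM := {m : ℕ | LinearMap.range (fM ^ m) = LinearMap.range (fM ^ (m + 1))} with hSM
    set SN := {m : ℕ | LinearMap.range (fN ^ m) = LinearMap.range (fN ^ (m + 1))} with hSN
    have hsMem := Nat.sInf_mem hS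
    have hMmem : sInf SM ∈ SM := Nat.sInf_mem ⟨n, hn.1⟩
    have hNmem : sInf SN ∈ SN := Nat.sInf_mem ⟨n, hn.2⟩
    apply le_antisymm
    · apply Nat.sInf_le
      exact ⟨range_stab fM (le_max_left _ _) hMmem, range_stab fN (le_max_right _ _) hNmem⟩
    · exact max_le (Nat.sInf_le hsMem.1) (Nat.sInf_le hsMem.2)
end

section
/- Let X be a complex Banach space and T a bounded linear operator such that T = T_M ⊕ T_N with respect to a topological direct sum X = M ⊕ N of closed T-invariant subspaces, where T_M is bounded below and T_N is quasinilpotent. Then there exists ε > 0 such that T − λ is bounded below for all complex λ with 0 < |λ| < ε; i.e., 0 is not an accumulation point of the approximate point spectrum of T. -/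
open Filter Topology
set_option maxHeartbeats 4000000

private lemma aux_quasi_bb {Y : Type*} [NormedAddCommGroup Y] [NormedSpace ℂ Y] [CompleteSpace Y]
    (S : Y →L[ℂ] Y) (hq : spectralRadius ℂ S = 0) (l : ℂ) (hl0 : 0 < ‖l‖) :
    ∃ C : ℝ, 0 ≤ C ∧ ∀ n : Y, ‖n‖ ≤ (C + 1) * ‖(S - l • (1 : Y →L[ℂ] Y)) n‖ := by
  have hres : l ∈ resolventSet ℂ S :=
    spectrum.mem_resolventSet_of_spectralRadius_lt (by rw [hq]; simpa using hl0)
  have hunit : IsUnit (algebraMap ℂ (Y →L[ℂ] Y) l - S) := hres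
  obtain ⟨u, hu⟩ := hunit
  refine ⟨‖(↑u⁻¹ : Y →L[ℂ] Y)‖, norm_nonneg _, fun n => ?_⟩
  set v : Y →L[ℂ] Y := ↑u⁻¹ with hv
  have h1 : v ((algebraMap ℂ (Y →L[ℂ] Y) l - S) n) = n := by
    conv_lhs => rw [← hu]
    show ((↑u⁻¹ * ↑u : (Y →L[ℂ] Y))) n = n
    rw [u.inv_mul]
    rfl
  have h2 : ‖n‖ ≤ ‖v‖ * ‖(algebraMap ℂ (Y →L[ℂ] Y) l - S) n‖ := by
    conv_lhs => rw [← h1]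
    exact v.le_opNorm _
  have h3 : ‖(algebraMap ℂ (Y →L[ℂ] Y) l - S) n‖ = ‖(S - l • (1 : Y →L[ℂ] Y)) n‖ := by
    rw [← norm_neg]
    congr 1
    simp [Algebra.algebraMap_eq_smul_one]
  rw [h3] at h2
  refine h2.trans ?_
  have h4 := norm_nonneg ((S - l • (1 : Y →L[ℂ] Y)) n)
  linarith

/-- If T = T_M ⊕ T_N with T_M bounded below and T_N quasinilpotent, then T - λ
is bounded below for all small nonzero λ. -/
theorem stmt_8 {X : Type*} [NormedAddCommGroup X] [NormedSpace ℂ X] [CompleteSpace X]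
    (T : X →L[ℂ] X) (M N : Submodule ℂ X)
    (hMc : IsClosed (M : Set X)) (hNc : IsClosed (N : Set X))
    (hM : ∀ x ∈ M, T x ∈ M) (hN : ∀ x ∈ N, T x ∈ N)
    (hcompl : IsCompl M N)
    (hbb : ∃ c > (0 : ℝ), ∀ x : M, c * ‖x‖ ≤ ‖clmRestrict T M hM x‖)
    (hq : spectralRadius ℂ (clmRestrict T N hN) = 0) :
    ∃ ε > (0 : ℝ), ∀ l : ℂ, 0 < ‖l‖ → ‖l‖ < ε →
      ∃ c > (0 : ℝ), ∀ x : X, c * ‖x‖ ≤ ‖(T - l • (1 : X →L[ℂ] X)) x‖ := by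
  haveI : CompleteSpace M := hMc.completeSpace_coe
  haveI : CompleteSpace N := hNc.completeSpace_coe
  obtain ⟨c, hc, hcbb⟩ := hbb
  set P : X →L[ℂ] M := M.linearProjOfClosedCompl N hcompl hMc hNc with hP
  set Q : X →L[ℂ] N := N.linearProjOfClosedCompl M hcompl.symm hNc hMc with hQ
  refine ⟨c, hc, fun l hl0 hlc => ?_⟩
  -- T_N - l is invertible, lower bound on N
  obtain ⟨Cv, hCv0, hNlow⟩ := aux_quasi_bb (clmRestrict T N hN) hq l hl0
  -- lower bound for T_M - l on M
  have hMlow : ∀ m : M, (c - ‖l‖) * ‖m‖ ≤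
      ‖(clmRestrict T M hM - l • (1 : M →L[ℂ] M)) m‖ := by
    intro m
    have e : (clmRestrict T M hM - l • (1 : M →L[ℂ] M)) m = clmRestrict T M hM m - l • m := by
      rw [ContinuousLinearMap.sub_apply, ContinuousLinearMap.smul_apply,
        ContinuousLinearMap.one_apply]
    have h1 : ‖clmRestrict T M hM m‖ - ‖l • m‖ ≤
        ‖(clmRestrict T M hM - l • (1 : M →L[ℂ] M)) m‖ := by
      rw [e]; exact norm_sub_norm_le _ _
    have h2 : ‖l • m‖ = ‖l‖ * ‖m‖ := norm_smul _ _
    linarith [hcbb m]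
  -- constants
  set cM : ℝ := c - ‖l‖ with hcM
  have hcM0 : 0 < cM := by rw [hcM]; linarith
  set K : ℝ := (‖P‖ + 1) / cM + (‖Q‖ + 1) * (Cv + 1) with hK
  have hK0 : 0 < K := by
    rw [hK]
    have h1 : 0 < (‖P‖ + 1) / cM := by positivity
    have h2 : 0 ≤ (‖Q‖ + 1) * (Cv + 1) := by positivity
    linarith
  refine ⟨K⁻¹, by positivity, fun x => ?_⟩
  set A : X →L[ℂ] X := T - l • (1 : X →L[ℂ] X) with hA
  set m : M := P x with hm
  set n : N := Q x with hn
  have hdecomp : (m : X) + (n : X) = x :=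
    Submodule.projection_add_projection_eq_self hcompl x
  have hAm : A (m : X) = ((clmRestrict T M hM - l • (1 : M →L[ℂ] M)) m : X) := by
    simp [hA, clmRestrict]
    rfl
  have hAn : A (n : X) = ((clmRestrict T N hN - l • (1 : N →L[ℂ] N)) n : X) := by
    simp [hA, clmRestrict]
    rfl
  have hAx : A x = ((clmRestrict T M hM - l • (1 : M →L[ℂ] M)) m : X)
      + ((clmRestrict T N hN - l • (1 : N →L[ℂ] N)) n : X) := by
    rw [← hAm, ← hAn, ← map_add, hdecomp]
  -- P (A x) = A_M m, Q (A x) = A_N n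
  have hPAx : P (A x) = (clmRestrict T M hM - l • (1 : M →L[ℂ] M)) m := by
    rw [hAx]
    have : ∀ y : X, P y = M.projectionOnto N hcompl y := fun y => rfl
    rw [map_add, this, this]
    rw [Submodule.linearProjOfIsCompl_apply_left hcompl,
      Submodule.linearProjOfIsCompl_apply_right' hcompl _]
    simp
    exact Submodule.coe_mem _
  have hQAx : Q (A x) = (clmRestrict T N hN - l • (1 : N →L[ℂ] N)) n := by
    rw [hAx]
    have : ∀ y : X, Q y = N.projectionOnto M hcompl.symm y := fun y => rfl
    rw [map_add, this, this]
    rw [Submodule.linearProjOfIsCompl_apply_left hcompl.symm,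
      Submodule.linearProjOfIsCompl_apply_right' hcompl.symm _]
    simp
    exact Submodule.coe_mem _
  -- norm estimates
  have hPe : ‖(clmRestrict T M hM - l • (1 : M →L[ℂ] M)) m‖ ≤ (‖P‖ + 1) * ‖A x‖ := by
    rw [← hPAx]
    calc ‖P (A x)‖ ≤ ‖P‖ * ‖A x‖ := P.le_opNorm _
    _ ≤ (‖P‖ + 1) * ‖A x‖ := by linarith [norm_nonneg (A x)]
  have hQe : ‖(clmRestrict T N hN - l • (1 : N →L[ℂ] N)) n‖ ≤ (‖Q‖ + 1) * ‖A x‖ := by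
    rw [← hQAx]
    calc ‖Q (A x)‖ ≤ ‖Q‖ * ‖A x‖ := Q.le_opNorm _
    _ ≤ (‖Q‖ + 1) * ‖A x‖ := by linarith [norm_nonneg (A x)]
  have hmb : ‖m‖ ≤ (‖P‖ + 1) / cM * ‖A x‖ := by
    have := hMlow m
    rw [div_mul_eq_mul_div, le_div_iff₀ hcM0]
    linarith [hPe]
  have hnb : ‖n‖ ≤ (‖Q‖ + 1) * (Cv + 1) * ‖A x‖ := by
    calc ‖n‖ ≤ (Cv + 1) * ‖(clmRestrict T N hN - l • (1 : N →L[ℂ] N)) n‖ := hNlow n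
    _ ≤ (Cv + 1) * ((‖Q‖ + 1) * ‖A x‖) := mul_le_mul_of_nonneg_left hQe (by linarith)
    _ = (‖Q‖ + 1) * (Cv + 1) * ‖A x‖ := by ring
  have hxb : ‖x‖ ≤ K * ‖A x‖ := by
    calc ‖x‖ = ‖(m : X) + (n : X)‖ := by rw [hdecomp]
    _ ≤ ‖(m : X)‖ + ‖(n : X)‖ := norm_add_le _ _
    _ = ‖m‖ + ‖n‖ := rfl
    _ ≤ (‖P‖ + 1) / cM * ‖A x‖ + (‖Q‖ + 1) * (Cv + 1) * ‖A x‖ := add_le_add hmb hnb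
    _ = K * ‖A x‖ := by rw [hK]; ring
  exact (inv_mul_le_iff₀ hK0).mpr hxb
end

section
/- Let X be a complex Banach space and T a bounded linear operator such that X = M ⊕ N for closed T-invariant subspaces with T_M surjective and T_N quasinilpotent. Then there exists ε > 0 such that T − λ is surjective for all complex λ with 0 < |λ| < ε; i.e., 0 is not an accumulation point of the surjective spectrum of T. -/
set_option maxHeartbeats 1000000


open Filter Topology

/-- Surjectivity of continuous linear maps between Banach spaces is stable under
small perturbations. -/
theorem surj_perturb {E F : Type*} [NormedAddCommGroup E] [NormedSpace ℂ E] [CompleteSpace E]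
    [NormedAddCommGroup F] [NormedSpace ℂ F] [CompleteSpace F]
    (f : E →L[ℂ] F) (hf : Function.Surjective f) :
    ∃ ε > (0 : ℝ), ∀ g : E →L[ℂ] F, ‖g‖ < ε → Function.Surjective (f + g) := by
  obtain ⟨fsymm, hpos⟩ := f.exists_nonlinearRightInverse_of_surjective
    (LinearMap.range_eq_top.2 hf)
  refine ⟨(fsymm.nnnorm : ℝ)⁻¹, inv_pos.2 (by exact_mod_cast hpos), fun g hg y => ?_⟩
  have happrox : ApproximatesLinearOn (f + g) f Set.univ ‖g‖₊ := by
    intro x _ z _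
    have : (f + g) x - (f + g) z - f (x - z) = g (x - z) := by
      simp only [ContinuousLinearMap.add_apply, map_sub]; abel
    rw [this]
    exact g.le_opNorm _
  have hδ : (0 : ℝ) < (fsymm.nnnorm : ℝ)⁻¹ - ‖g‖₊ := by
    have : (‖g‖₊ : ℝ) = ‖g‖ := rfl
    linarith [hg, this]
  set r : ℝ := dist y ((f + g) 0) / ((fsymm.nnnorm : ℝ)⁻¹ - ‖g‖₊) with hr
  have hr0 : 0 ≤ r := div_nonneg dist_nonneg hδ.le
  have hsurjOn := happrox.surjOn_closedBall_of_nonlinearRightInverse fsymm (b := 0) hr0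
    (Set.subset_univ _)
  have hy : y ∈ Metric.closedBall ((f + g) 0) (((fsymm.nnnorm : ℝ)⁻¹ - ‖g‖₊) * r) := by
    rw [Metric.mem_closedBall, hr, mul_div_cancel₀ _ hδ.ne']
  obtain ⟨x, -, hx⟩ := hsurjOn hy
  exact ⟨x, hx⟩

/-- If T = T_M ⊕ T_N with T_M surjective and T_N quasinilpotent, then T - λ is
surjective for all small nonzero λ. -/
theorem stmt_9 {X : Type*} [NormedAddCommGroup X] [NormedSpace ℂ X] [CompleteSpace X]
    (T : X →L[ℂ] X) (M N : Submodule ℂ X)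
    (hMc : IsClosed (M : Set X)) (hNc : IsClosed (N : Set X))
    (hM : ∀ x ∈ M, T x ∈ M) (hN : ∀ x ∈ N, T x ∈ N)
    (hcompl : IsCompl M N)
    (hsurj : Function.Surjective (clmRestrict T M hM))
    (hq : spectralRadius ℂ (clmRestrict T N hN) = 0) :
    ∃ ε > (0 : ℝ), ∀ l : ℂ, 0 < ‖l‖ → ‖l‖ < ε →
      Function.Surjective (T - l • (1 : X →L[ℂ] X)) := by
  have : CompleteSpace M := hMc.completeSpace_coe
  have : CompleteSpace N := hNc.completeSpace_coe
  obtain ⟨ε, hε, hS⟩ := surj_perturb (clmRestrict T M hM) hsurj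
  refine ⟨ε, hε, fun l hl0 hlε y => ?_⟩
  -- Surjectivity on M: perturbation of a surjective map
  have hSl : Function.Surjective (clmRestrict T M hM - l • (1 : M →L[ℂ] M)) := by
    have hnorm : ‖(-l) • (1 : M →L[ℂ] M)‖ < ε := by
      refine lt_of_le_of_lt ?_ hlε
      apply ContinuousLinearMap.opNorm_le_bound _ (norm_nonneg l)
      intro x
      rw [ContinuousLinearMap.smul_apply, ContinuousLinearMap.one_apply, norm_smul, norm_neg]
    have h := hS ((-l) • (1 : M →L[ℂ] M)) hnorm
    have heq : clmRestrict T M hM + (-l) • (1 : M →L[ℂ] M)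
        = clmRestrict T M hM - l • (1 : M →L[ℂ] M) := by
      ext x
      simp [sub_eq_add_neg, neg_smul]
    rwa [heq] at h
  -- Bijectivity on N: l is not in the spectrum since the spectral radius is 0
  have hNl : Function.Surjective (clmRestrict T N hN - l • (1 : N →L[ℂ] N)) := by
    have hns : l ∉ spectrum ℂ (clmRestrict T N hN) := by
      intro hl
      have h2 : (‖l‖₊ : ENNReal) ≤ spectralRadius ℂ (clmRestrict T N hN) := by
        unfold spectralRadius
        exact le_iSup₂ (f := fun k (_ : k ∈ spectrum ℂ (clmRestrict T N hN)) =>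
          (‖k‖₊ : ENNReal)) l hl
      rw [hq] at h2
      have : l = 0 := by simpa using h2
      rw [this] at hl0
      simp at hl0
    have hunit : IsUnit (algebraMap ℂ (N →L[ℂ] N) l - clmRestrict T N hN) :=
      spectrum.notMem_iff.mp hns
    obtain ⟨u, hu⟩ := hunit
    intro z
    have h := congrArg (fun (B : N →L[ℂ] N) => B (-z)) u.mul_inv
    rw [hu] at h
    simp only [ContinuousLinearMap.mul_apply, ContinuousLinearMap.one_apply] at h
    refine ⟨(↑u⁻¹ : N →L[ℂ] N) (-z), ?_⟩
    have halg : algebraMap ℂ (N →L[ℂ] N) l = l • (1 : N →L[ℂ] N) :=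
      Algebra.algebraMap_eq_smul_one l
    rw [halg] at h
    have hflip : (clmRestrict T N hN - l • (1 : N →L[ℂ] N)) ((↑u⁻¹ : N →L[ℂ] N) (-z))
        = -((l • (1 : N →L[ℂ] N) - clmRestrict T N hN) ((↑u⁻¹ : N →L[ℂ] N) (-z))) := by
      simp only [ContinuousLinearMap.sub_apply, neg_sub]
    rw [hflip, h, neg_neg]
  -- Decompose y = m + n
  have hy : y ∈ M ⊔ N := by rw [hcompl.sup_eq_top]; trivial
  obtain ⟨m, hm, n, hn, rfl⟩ := Submodule.mem_sup.mp hy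
  obtain ⟨xm, hxm⟩ := hSl ⟨m, hm⟩
  obtain ⟨xn, hxn⟩ := hNl ⟨n, hn⟩
  refine ⟨(xm : X) + (xn : X), ?_⟩
  have hm' : (T - l • (1 : X →L[ℂ] X)) (xm : X) = m := by
    have h := congrArg (Subtype.val) hxm
    simp only [ContinuousLinearMap.sub_apply, ContinuousLinearMap.smul_apply,
      ContinuousLinearMap.one_apply, AddSubgroupClass.coe_sub, SetLike.val_smul] at h ⊢
    rwa [show ((clmRestrict T M hM xm : M) : X) = T (xm : X) from rfl] at h
  have hn' : (T - l • (1 : X →L[ℂ] X)) (xn : X) = n := by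
    have h := congrArg (Subtype.val) hxn
    simp only [ContinuousLinearMap.sub_apply, ContinuousLinearMap.smul_apply,
      ContinuousLinearMap.one_apply, AddSubgroupClass.coe_sub, SetLike.val_smul] at h ⊢
    rwa [show ((clmRestrict T N hN xn : N) : X) = T (xn : X) from rfl] at h
  rw [map_add, hm', hn']
end

section
/- Let X be a complex Banach space and T a bounded linear operator. Suppose the quasinilpotent part H₀(T) is closed and there is a closed subspace M with X = M ⊕ H₀(T), T(M) ⊆ M, and T(M) closed. Then the restriction of T to M is bounded below and the restriction of T to H₀(T) is quasinilpotent. -/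
open Filter Topology

/-- The quasinilpotent part of an operator. -/
def H0 {X : Type*} [NormedAddCommGroup X] [NormedSpace ℂ X] (T : X →L[ℂ] X) : Set X :=
  {x : X | Tendsto (fun n : ℕ => ‖(T ^ n) x‖ ^ (1 / (n : ℝ))) atTop (nhds 0)}

lemma rpow_one_div_tendsto_one {K : ℝ} (hK : 0 < K) :
    Tendsto (fun n : ℕ => K ^ (1 / (n : ℝ))) atTop (𝓝 1) := by
  have h1 : Tendsto (fun n : ℕ => Real.log K * (1 / (n : ℝ))) atTop (𝓝 0) := by
    simpa using tendsto_one_div_atTop_nhds_zero_nat.const_mul (Real.log K)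
  have h2 := (Real.continuous_exp.tendsto 0).comp h1
  simp only [Real.exp_zero] at h2
  refine h2.congr fun n => ?_
  rw [Function.comp_apply, ← Real.rpow_def_of_pos hK]

lemma clmRestrict_pow_coe {X : Type*} [NormedAddCommGroup X] [NormedSpace ℂ X]
    (T : X →L[ℂ] X) (N : Submodule ℂ X) (hN : ∀ x ∈ N, T x ∈ N) (n : ℕ) (x : N) :
    (((clmRestrict T N hN) ^ n) x : X) = (T ^ n) (x : X) := by
  induction n generalizing x with
  | zero => simp
  | succ n ih =>
    rw [pow_succ, pow_succ, ContinuousLinearMap.mul_apply, ContinuousLinearMap.mul_apply,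
      ih (clmRestrict T N hN x)]
    rfl

lemma spectralRadius_eq_zero_of_pointwise {Y : Type*} [NormedAddCommGroup Y] [NormedSpace ℂ Y]
    [CompleteSpace Y] (S : Y →L[ℂ] Y)
    (h : ∀ x : Y, Tendsto (fun n : ℕ => ‖(S ^ n) x‖ ^ (1 / (n : ℝ))) atTop (𝓝 0)) :
    spectralRadius ℂ S = 0 := by
  have key : ∀ ε : ℝ, 0 < ε → ∃ K : ℝ, 0 < K ∧ ∀ n : ℕ, ‖S ^ n‖ ≤ K * ε ^ n := by
    intro ε hε
    set F : ℕ → Set Y := fun C => {x | ∀ n : ℕ, ‖(S ^ n) x‖ ≤ C * ε ^ n} with hF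
    have hFc : ∀ C, IsClosed (F C) := by
      intro C
      have : F C = ⋂ n : ℕ, {x : Y | ‖(S ^ n) x‖ ≤ C * ε ^ n} := by
        ext x; simp [hF, Set.mem_iInter]
      rw [this]
      exact isClosed_iInter fun n =>
        isClosed_le ((S ^ n).continuous.norm) continuous_const
    have hunion : ⋃ C : ℕ, F C = Set.univ := by
      refine Set.eq_univ_of_forall fun x => Set.mem_iUnion.mpr ?_
      obtain ⟨N, hNx⟩ := Metric.tendsto_atTop.mp (h x) ε hε
      set N₁ := N + 1 with hN₁
      have htail : ∀ n : ℕ, N₁ ≤ n → ‖(S ^ n) x‖ ≤ ε ^ n := by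
        intro n hn
        have hn0 : n ≠ 0 := by omega
        have h1 : ‖(S ^ n) x‖ ^ (1 / (n : ℝ)) ≤ ε := by
          have := hNx n (by omega)
          rw [Real.dist_eq, sub_zero,
            abs_of_nonneg (Real.rpow_nonneg (norm_nonneg _) _)] at this
          exact this.le
        calc ‖(S ^ n) x‖ = (‖(S ^ n) x‖ ^ (1 / (n : ℝ))) ^ n := by
              rw [one_div, Real.rpow_inv_natCast_pow (norm_nonneg _) hn0]
          _ ≤ ε ^ n := pow_le_pow_left₀ (Real.rpow_nonneg (norm_nonneg _) _) h1 n
      have hne : (Finset.range N₁).Nonempty := ⟨0, by simp [hN₁]⟩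
      set A := (Finset.range N₁).sup' hne (fun n => ‖(S ^ n) x‖ / ε ^ n) with hA
      obtain ⟨C, hC⟩ := exists_nat_ge (max A 1)
      refine ⟨C, fun n => ?_⟩
      have hCA : A ≤ (C : ℝ) := (le_max_left _ _).trans hC
      have hC1 : (1 : ℝ) ≤ C := (le_max_right _ _).trans hC
      rcases le_or_gt N₁ n with hn | hn
      · calc ‖(S ^ n) x‖ ≤ ε ^ n := htail n hn
          _ = 1 * ε ^ n := (one_mul _).symm
          _ ≤ C * ε ^ n := mul_le_mul_of_nonneg_right hC1 (pow_nonneg hε.le n)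
      · have hmem : n ∈ Finset.range N₁ := Finset.mem_range.mpr hn
        have h2 : ‖(S ^ n) x‖ / ε ^ n ≤ (C : ℝ) :=
          (Finset.le_sup' (fun n => ‖(S ^ n) x‖ / ε ^ n) hmem).trans hCA
        rwa [div_le_iff₀ (pow_pos hε n)] at h2
    obtain ⟨C, x₀, hx₀⟩ := nonempty_interior_of_iUnion_of_closed hFc hunion
    obtain ⟨r, hr, hball⟩ := Metric.isOpen_iff.mp isOpen_interior x₀ hx₀
    have hball' : Metric.ball x₀ r ⊆ F C := hball.trans interior_subset
    have hx₀F : x₀ ∈ F C := hball' (Metric.mem_ball_self hr)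
    have hsmall : ∀ y : Y, ‖y‖ < r → ∀ n : ℕ, ‖(S ^ n) y‖ ≤ 2 * C * ε ^ n := by
      intro y hy n
      have hmem : x₀ + y ∈ Metric.ball x₀ r := by
        rw [Metric.mem_ball, dist_eq_norm, add_sub_cancel_left]; exact hy
      have h1 := hball' hmem n
      have h2 := hx₀F n
      have h3 : (S ^ n) y = (S ^ n) (x₀ + y) - (S ^ n) x₀ := by
        rw [map_add]; abel
      rw [h3]
      calc ‖(S ^ n) (x₀ + y) - (S ^ n) x₀‖ ≤ ‖(S ^ n) (x₀ + y)‖ + ‖(S ^ n) x₀‖ :=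
            norm_sub_le _ _
        _ ≤ 2 * C * ε ^ n := by linarith
    refine ⟨(4 * C + 4) / r, by positivity, fun n => ?_⟩
    refine ContinuousLinearMap.opNorm_le_bound _ (by positivity) fun z => ?_
    rcases eq_or_ne z 0 with rfl | hz
    · simp
    · have hznorm : 0 < ‖z‖ := norm_pos_iff.mpr hz
      set c : ℂ := ((r / (2 * ‖z‖) : ℝ) : ℂ) with hc
      have hcnorm : ‖c‖ = r / (2 * ‖z‖) := by
        rw [hc, Complex.norm_real, Real.norm_of_nonneg (by positivity)]
      have hy : ‖c • z‖ < r := by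
        rw [norm_smul, hcnorm, div_mul_eq_mul_div, mul_comm (2 : ℝ) ‖z‖, ← div_div,
          mul_div_assoc, div_self hznorm.ne', mul_one]
        linarith
      have hb := hsmall (c • z) hy n
      rw [map_smul, norm_smul, hcnorm, div_mul_eq_mul_div, div_le_iff₀ (by positivity)] at hb
      rw [div_mul_eq_mul_div, div_mul_eq_mul_div, le_div_iff₀ hr]
      have hC0 : (0 : ℝ) ≤ (C : ℝ) := Nat.cast_nonneg _
      nlinarith [pow_pos hε n, norm_nonneg ((S ^ n) z), hb, hznorm]
  have hlim : Tendsto (fun n : ℕ => ‖S ^ n‖ ^ (1 / (n : ℝ))) atTop (𝓝 0) := by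
    rw [Metric.tendsto_atTop]
    intro δ hδ
    obtain ⟨K, hK, hKb⟩ := key (δ / 4) (by positivity)
    have h2 : ∀ᶠ n : ℕ in atTop, K ^ (1 / (n : ℝ)) ≤ 2 :=
      (rpow_one_div_tendsto_one hK).eventually_le_const (by norm_num)
    obtain ⟨N, hN⟩ := eventually_atTop.mp h2
    refine ⟨max N 1, fun n hn => ?_⟩
    have hn1 : n ≠ 0 := by
      have := le_trans (le_max_right N 1) hn; omega
    have hstep : ‖S ^ n‖ ^ (1 / (n : ℝ)) ≤ K ^ (1 / (n : ℝ)) * (δ / 4) := by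
      calc ‖S ^ n‖ ^ (1 / (n : ℝ)) ≤ (K * (δ / 4) ^ n) ^ (1 / (n : ℝ)) :=
            Real.rpow_le_rpow (norm_nonneg _) (hKb n) (by positivity)
        _ = K ^ (1 / (n : ℝ)) * ((δ / 4) ^ n) ^ (1 / (n : ℝ)) :=
            Real.mul_rpow hK.le (by positivity)
        _ = K ^ (1 / (n : ℝ)) * (δ / 4) := by
            rw [one_div, Real.pow_rpow_inv_natCast (by positivity) hn1]
    have hKn := hN n (le_trans (le_max_left N 1) hn)
    rw [Real.dist_eq, sub_zero, abs_of_nonneg (Real.rpow_nonneg (norm_nonneg _) _)]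
    have : K ^ (1 / (n : ℝ)) * (δ / 4) ≤ 2 * (δ / 4) :=
      mul_le_mul_of_nonneg_right hKn (by positivity)
    linarith
  have g := spectrum.pow_norm_pow_one_div_tendsto_nhds_spectralRadius S
  have g2 : Tendsto (fun n : ℕ => ENNReal.ofReal (‖S ^ n‖ ^ (1 / (n : ℝ)))) atTop (𝓝 0) := by
    have := (ENNReal.continuous_ofReal.tendsto 0).comp hlim
    simpa [Function.comp_def] using this
  exact tendsto_nhds_unique g g2

/-- If H₀(T) is closed and complemented by a closed T-invariant M with T(M)
closed, then T_M is bounded below and the restriction to H₀(T) is quasinilpotent. -/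
theorem stmt_10 {X : Type*} [NormedAddCommGroup X] [NormedSpace ℂ X] [CompleteSpace X]
    (T : X →L[ℂ] X) (M N₀ : Submodule ℂ X)
    (hN0 : (N₀ : Set X) = H0 T) (hN0c : IsClosed (N₀ : Set X))
    (hMc : IsClosed (M : Set X))
    (hM : ∀ x ∈ M, T x ∈ M) (hN : ∀ x ∈ N₀, T x ∈ N₀)
    (hcompl : IsCompl M N₀)
    (hTM : IsClosed (T '' (M : Set X))) :
    (∃ c > (0 : ℝ), ∀ x : M, c * ‖x‖ ≤ ‖clmRestrict T M hM x‖) ∧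
      spectralRadius ℂ (clmRestrict T N₀ hN) = 0 := by
  constructor
  · haveI : CompleteSpace M := hMc.completeSpace_coe
    set S₁ : M →L[ℂ] X := T.comp (Submodule.subtypeL M) with hS₁
    have hrangeS : ((S₁.range : Submodule ℂ X) : Set X) = T '' (M : Set X) := by
      ext y
      constructor
      · rintro ⟨x, rfl⟩; exact ⟨x, x.2, rfl⟩
      · rintro ⟨x, hx, rfl⟩; exact ⟨⟨x, hx⟩, rfl⟩
    have hYc : IsClosed ((S₁.range : Submodule ℂ X) : Set X) := by
      rw [hrangeS]; exact hTM
    haveI : CompleteSpace (S₁.range) := hYc.completeSpace_coe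
    set f : M →L[ℂ] S₁.range :=
      S₁.codRestrict _ (fun x => LinearMap.mem_range_self _ x) with hf
    have hinj : f.ker = ⊥ := by
      rw [LinearMap.ker_eq_bot']
      intro x hx
      have hx0 : T (x : X) = 0 := by
        have : S₁ x = 0 := by
          have := congrArg Subtype.val hx
          simpa [hf] using this
        simpa [hS₁] using this
      have hxH : (x : X) ∈ H0 T := by
        have hzero : ∀ n : ℕ, 1 ≤ n → (T ^ n) (x : X) = 0 := by
          intro n hn
          obtain ⟨m, rfl⟩ : ∃ m, n = m + 1 := ⟨n - 1, by omega⟩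
          rw [pow_succ, ContinuousLinearMap.mul_apply, hx0, map_zero]
        have hev : ∀ᶠ n : ℕ in atTop, ‖(T ^ n) (x : X)‖ ^ (1 / (n : ℝ)) = 0 := by
          filter_upwards [eventually_ge_atTop 1] with n hn
          rw [hzero n hn, norm_zero, Real.zero_rpow]
          exact one_div_ne_zero (by exact_mod_cast (by omega : n ≠ 0))
        exact (tendsto_congr' (by filter_upwards [hev] with n hn; rw [hn])).mpr
          tendsto_const_nhds
      have hxN : (x : X) ∈ N₀ := by rw [← SetLike.mem_coe, hN0]; exact hxH
      have : (x : X) = 0 :=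
        Submodule.disjoint_def.mp hcompl.disjoint (x : X) x.2 hxN
      exact Subtype.ext this
    have hsurj : f.range = ⊤ := by
      rw [LinearMap.range_eq_top]
      rintro ⟨y, hy⟩
      obtain ⟨x, hx⟩ := hy
      exact ⟨x, Subtype.ext hx⟩
    set e := ContinuousLinearEquiv.ofBijective f hinj hsurj with he
    set g : (S₁.range) →L[ℂ] M := (e.symm : (S₁.range) →L[ℂ] M) with hg
    refine ⟨(‖g‖ + 1)⁻¹, by positivity, fun x => ?_⟩
    have hnorm : ‖e x‖ = ‖clmRestrict T M hM x‖ := rfl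
    have h1 : ‖x‖ ≤ (‖g‖ + 1) * ‖clmRestrict T M hM x‖ := by
      calc ‖x‖ = ‖g (e x)‖ := by rw [hg]; simp [e.symm_apply_apply]
        _ ≤ ‖g‖ * ‖e x‖ := g.le_opNorm _
        _ ≤ (‖g‖ + 1) * ‖clmRestrict T M hM x‖ := by
            rw [hnorm]
            exact mul_le_mul_of_nonneg_right (by linarith) (norm_nonneg _)
    rw [inv_mul_le_iff₀ (by positivity)]
    exact h1
  · haveI : CompleteSpace N₀ := hN0c.completeSpace_coe
    apply spectralRadius_eq_zero_of_pointwise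
    intro x
    have hx : (x : X) ∈ H0 T := by rw [← hN0]; exact x.2
    have hx' : Tendsto (fun n : ℕ => ‖(T ^ n) (x : X)‖ ^ (1 / (n : ℝ))) atTop (𝓝 0) := hx
    refine hx'.congr fun n => ?_
    congr 1
    rw [show ‖((clmRestrict T N₀ hN) ^ n) x‖ = ‖(((clmRestrict T N₀ hN) ^ n) x : X)‖ from rfl,
      clmRestrict_pow_coe]
end

section
/- Let X be a complex Banach space and T a bounded linear operator. If there exist closed T-invariant subspaces M, N with X = M ⊕ N, T_M bounded below, and T_N quasinilpotent, then N = H₀(T); in particular the quasinilpotent part of T is closed. -/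
open Filter Topology

lemma clmRestrict_coe_pow {X : Type*} [NormedAddCommGroup X] [NormedSpace ℂ X]
    (T : X →L[ℂ] X) (M : Submodule ℂ X) (h : ∀ x ∈ M, T x ∈ M) (n : ℕ) (x : M) :
    (((clmRestrict T M h ^ n) x : X)) = (T ^ n) x := by
  induction n with
  | zero => simp
  | succ n ih =>
    rw [pow_succ', pow_succ']
    rw [ContinuousLinearMap.mul_apply, ContinuousLinearMap.mul_apply]
    have : ((clmRestrict T M h ((clmRestrict T M h ^ n) x) : X)) =
        T (((clmRestrict T M h ^ n) x : X)) := rfl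
    rw [this, ih]

/-- For `c > 0`, `c ^ (1/n) → 1`. -/
lemma tendsto_rpow_one_div_nat {c : ℝ} (hc : 0 < c) :
    Tendsto (fun n : ℕ => c ^ (1 / (n : ℝ))) atTop (𝓝 1) := by
  have h1 : Tendsto (fun n : ℕ => (1 / (n : ℝ))) atTop (𝓝 0) :=
    tendsto_one_div_atTop_nhds_zero_nat
  have h2 : ContinuousAt (fun y : ℝ => c ^ y) 0 :=
    Real.continuousAt_const_rpow hc.ne'
  have := h2.tendsto.comp h1
  simpa [Function.comp_def, Real.rpow_zero] using this

/-- If T = T_M ⊕ T_N with T_M bounded below and T_N quasinilpotent, then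
N = H₀(T); in particular H₀(T) is closed. -/
theorem stmt_11 {X : Type*} [NormedAddCommGroup X] [NormedSpace ℂ X] [CompleteSpace X]
    (T : X →L[ℂ] X) (M N : Submodule ℂ X)
    (hMc : IsClosed (M : Set X)) (hNc : IsClosed (N : Set X))
    (hM : ∀ x ∈ M, T x ∈ M) (hN : ∀ x ∈ N, T x ∈ N)
    (hcompl : IsCompl M N)
    (hbb : ∃ c > (0 : ℝ), ∀ x : M, c * ‖x‖ ≤ ‖clmRestrict T M hM x‖)
    (hq : spectralRadius ℂ (clmRestrict T N hN) = 0) :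
    (N : Set X) = H0 T ∧ IsClosed (H0 T) := by
  haveI : CompleteSpace N := hNc.completeSpace_coe
  -- Gelfand formula: ‖(T_N)^n‖^(1/n) → 0 in ℝ
  have hGelf : Tendsto (fun n : ℕ => ‖(clmRestrict T N hN) ^ n‖ ^ (1 / (n : ℝ)))
      atTop (𝓝 0) := by
    have h := spectrum.pow_norm_pow_one_div_tendsto_nhds_spectralRadius
      (clmRestrict T N hN)
    rw [hq] at h
    have h2 := (ENNReal.tendsto_toReal ENNReal.zero_ne_top).comp h
    simp only [Function.comp_def, ENNReal.toReal_zero] at h2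
    convert h2 using 2 with n
    rw [ENNReal.toReal_ofReal]
    positivity
  -- Forward: N ⊆ H0 T
  have hsub : (N : Set X) ⊆ H0 T := by
    intro x hx
    set y : N := ⟨x, hx⟩
    -- ‖T^n x‖ = ‖(T_N^n) y‖ ≤ ‖T_N^n‖ ‖y‖
    have hb : ∀ n : ℕ, ‖(T ^ n) x‖ ≤ ‖(clmRestrict T N hN) ^ n‖ * ‖y‖ := by
      intro n
      have : ‖(T ^ n) x‖ = ‖((clmRestrict T N hN ^ n) y : X)‖ := by
        rw [clmRestrict_coe_pow]
      rw [this]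
      exact ((clmRestrict T N hN ^ n)).le_opNorm y
    by_cases hy0 : x = 0
    · -- trivial: eventually the sequence is 0
      have : ∀ᶠ n : ℕ in atTop, ‖(T ^ n) x‖ ^ (1 / (n : ℝ)) = 0 := by
        filter_upwards [eventually_ge_atTop 1] with n hn
        have hn' : ((n : ℝ))⁻¹ ≠ 0 := by
          have : (0:ℝ) < n := by exact_mod_cast hn
          positivity
        simp [hy0, one_div, Real.zero_rpow hn']
      exact Tendsto.congr' (this.mono fun n h => h.symm) tendsto_const_nhds
    · have hy : (0 : ℝ) < ‖y‖ := by
        simpa [y, norm_pos_iff] using hy0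
      have hlim : Tendsto
          (fun n : ℕ => ‖(clmRestrict T N hN) ^ n‖ ^ (1 / (n : ℝ)) * ‖y‖ ^ (1 / (n : ℝ)))
          atTop (𝓝 0) := by
        have := hGelf.mul (tendsto_rpow_one_div_nat hy)
        simpa using this
      refine squeeze_zero (fun n => by positivity) (fun n => ?_) hlim
      calc ‖(T ^ n) x‖ ^ (1 / (n : ℝ))
          ≤ (‖(clmRestrict T N hN) ^ n‖ * ‖y‖) ^ (1 / (n : ℝ)) :=
            Real.rpow_le_rpow (norm_nonneg _) (hb n) (by positivity)
        _ = ‖(clmRestrict T N hN) ^ n‖ ^ (1 / (n : ℝ)) * ‖y‖ ^ (1 / (n : ℝ)) :=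
            Real.mul_rpow (ContinuousLinearMap.opNorm_nonneg _) (norm_nonneg _)
  -- Backward: H0 T ⊆ N
  have hsup : H0 T ⊆ (N : Set X) := by
    intro x hxH
    obtain ⟨c, hc, hcb⟩ := hbb
    -- decompose x = m + nn
    have hx : x ∈ M ⊔ N := by rw [hcompl.sup_eq_top]; trivial
    obtain ⟨m, hm, nn, hnn, rfl⟩ := Submodule.mem_sup.mp hx
    -- iterated lower bound
    have hlow : ∀ (k : ℕ) (z : M), c ^ k * ‖z‖ ≤ ‖(clmRestrict T M hM ^ k) z‖ := by
      intro k
      induction k with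
      | zero => intro z; simp
      | succ k ih =>
        intro z
        have hsucc : (clmRestrict T M hM ^ (k + 1)) z =
            clmRestrict T M hM ((clmRestrict T M hM ^ k) z) := by
          rw [pow_succ', ContinuousLinearMap.mul_apply]
        rw [hsucc]
        calc c ^ (k + 1) * ‖z‖ = c * (c ^ k * ‖z‖) := by ring
          _ ≤ c * ‖(clmRestrict T M hM ^ k) z‖ :=
              mul_le_mul_of_nonneg_left (ih z) hc.le
          _ ≤ ‖clmRestrict T M hM ((clmRestrict T M hM ^ k) z)‖ := hcb _
    -- show m = 0
    have hnnH : nn ∈ H0 T := hsub hnn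
    have hm0 : (m : X) = 0 := by
      by_contra hm0
      have hmnorm : (0 : ℝ) < ‖m‖ := by simpa [norm_pos_iff] using hm0
      -- triangle: T^k m = T^k (m+nn) - T^k nn
      have htri : ∀ k : ℕ, ‖(T ^ k) m‖ ≤ ‖(T ^ k) (m + nn)‖ + ‖(T ^ k) nn‖ := by
        intro k
        have : (T ^ k) m = (T ^ k) (m + nn) - (T ^ k) nn := by
          rw [map_add]; abel
        rw [this]
        exact norm_sub_le _ _
      have hev : ∀ᶠ k : ℕ in atTop, ‖m‖ < 2 / 2 ^ k := by
        have h1 : ∀ᶠ k : ℕ in atTop, ‖(T ^ k) (m + nn)‖ ^ (1 / (k : ℝ)) < c / 2 :=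
          hxH.eventually (gt_mem_nhds (by positivity))
        have h2 : ∀ᶠ k : ℕ in atTop, ‖(T ^ k) nn‖ ^ (1 / (k : ℝ)) < c / 2 :=
          hnnH.eventually (gt_mem_nhds (by positivity))
        filter_upwards [h1, h2, eventually_ge_atTop 1] with k hk1 hk2 hk
        have hkR : (0 : ℝ) < (k : ℝ) := by exact_mod_cast hk
        -- a < (c/2)^k from a^(1/k) < c/2
        have key : ∀ a : ℝ, 0 ≤ a → a ^ (1 / (k : ℝ)) < c / 2 → a < (c / 2) ^ k := by
          intro a ha hak
          have : (a ^ (1 / (k : ℝ))) ^ k < (c / 2) ^ k :=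
            pow_lt_pow_left₀ hak (by positivity) (by omega)
          calc a = (a ^ (1 / (k : ℝ))) ^ k := by
                rw [← Real.rpow_natCast (a ^ (1 / (k : ℝ))) k, ← Real.rpow_mul ha,
                  one_div_mul_cancel hkR.ne', Real.rpow_one]
            _ < (c / 2) ^ k := this
        have hlb : c ^ k * ‖m‖ ≤ ‖(T ^ k) m‖ := by
          calc c ^ k * ‖m‖ = c ^ k * ‖(⟨m, hm⟩ : M)‖ := rfl
            _ ≤ ‖(clmRestrict T M hM ^ k) ⟨m, hm⟩‖ := hlow k _
            _ = ‖((clmRestrict T M hM ^ k) (⟨m, hm⟩ : M) : X)‖ := rfl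
            _ = ‖(T ^ k) m‖ := by rw [clmRestrict_coe_pow]
        have : c ^ k * ‖m‖ < (c / 2) ^ k + (c / 2) ^ k :=
          lt_of_le_of_lt (hlb.trans (htri k))
            (add_lt_add (key _ (norm_nonneg _) hk1) (key _ (norm_nonneg _) hk2))
        have h2ck : (c / 2) ^ k + (c / 2) ^ k = c ^ k * (2 / 2 ^ k) := by
          rw [div_pow]; ring
        rw [h2ck] at this
        exact lt_of_mul_lt_mul_left this (by positivity)
      have hto : Tendsto (fun k : ℕ => 2 / 2 ^ k : ℕ → ℝ) atTop (𝓝 0) := by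
        have : Tendsto (fun k : ℕ => ((1:ℝ) / 2) ^ k) atTop (𝓝 0) :=
          tendsto_pow_atTop_nhds_zero_of_lt_one (by norm_num) (by norm_num)
        have := this.const_mul 2
        simpa [div_eq_mul_inv, mul_comm] using this
      have : ‖m‖ ≤ 0 := ge_of_tendsto hto (hev.mono fun k hk => hk.le)
      exact absurd (le_antisymm this (norm_nonneg _)) (by simpa [norm_pos_iff] using hmnorm.ne')
    rw [hm0, zero_add]
    exact hnn
  have heq : (N : Set X) = H0 T := Set.Subset.antisymm hsub hsup
  exact ⟨heq, heq ▸ hNc⟩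
end

section
/- Let X be a complex Banach space and T a bounded linear operator. If there exist closed T-invariant subspaces M, N with X = M ⊕ N, T_M surjective, and T_N quasinilpotent, then M = K(T), the analytical core of T; in particular K(T) is closed. -/
open Filter Topology
open scoped NNReal ENNReal

/-- The analytical core of an operator. -/
def Kcore {X : Type*} [NormedAddCommGroup X] [NormedSpace ℂ X] (T : X →L[ℂ] X) : Set X :=
  {x : X | ∃ c > (0 : ℝ), ∃ u : ℕ → X, u 0 = x ∧ (∀ n : ℕ, T (u (n + 1)) = u n) ∧
    ∀ n : ℕ, ‖u n‖ ≤ c ^ n * ‖x‖}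

/-- If T = T_M ⊕ T_N with T_M surjective and T_N quasinilpotent, then
M = K(T); in particular K(T) is closed. -/
theorem stmt_12 {X : Type*} [NormedAddCommGroup X] [NormedSpace ℂ X] [CompleteSpace X]
    (T : X →L[ℂ] X) (M N : Submodule ℂ X)
    (hMc : IsClosed (M : Set X)) (hNc : IsClosed (N : Set X))
    (hM : ∀ x ∈ M, T x ∈ M) (hN : ∀ x ∈ N, T x ∈ N)
    (hcompl : IsCompl M N)
    (hsurj : Function.Surjective (clmRestrict T M hM))
    (hq : spectralRadius ℂ (clmRestrict T N hN) = 0) :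
    (M : Set X) = Kcore T ∧ IsClosed (Kcore T) := by
  haveI : CompleteSpace M := hMc.completeSpace_coe
  haveI : CompleteSpace N := hNc.completeSpace_coe
  have hMK : (M : Set X) = Kcore T := by
    apply Set.Subset.antisymm
    · -- M ⊆ Kcore T : use open mapping theorem on the surjective T_M
      obtain ⟨C, hC, hCs⟩ := (clmRestrict T M hM).exists_preimage_norm_le hsurj
      intro x hx
      choose g hg hgn using hCs
      let u : ℕ → M := fun n => Nat.rec ⟨x, hx⟩ (fun _ y => g y) n
      have husucc : ∀ n, u (n + 1) = g (u n) := fun n => rfl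
      have hTuX : ∀ n : ℕ, T ((u (n + 1)).1) = (u n).1 := by
        intro n
        have h2 : (clmRestrict T M hM) (u (n + 1)) = u n := by
          rw [husucc]; exact hg (u n)
        exact congrArg Subtype.val h2
      have hnX : ∀ n : ℕ, ‖(u n).1‖ ≤ C ^ n * ‖x‖ := by
        intro n
        induction n with
        | zero => simp [u]
        | succ n ih =>
          have h1 : ‖(u (n + 1)).1‖ ≤ C * ‖(u n).1‖ := by
            rw [husucc]; exact hgn (u n)
          calc ‖(u (n + 1)).1‖ ≤ C * ‖(u n).1‖ := h1
            _ ≤ C * (C ^ n * ‖x‖) := mul_le_mul_of_nonneg_left ih hC.le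
            _ = C ^ (n + 1) * ‖x‖ := by ring
      exact ⟨C, hC, fun n => (u n).1, rfl, hTuX, hnX⟩
    · -- Kcore T ⊆ M
      intro x hx
      obtain ⟨c, hc, u, hu0, hTu, hnorm⟩ := hx
      set S := clmRestrict T N hN with hS
      set Q : X →L[ℂ] N := N.linearProjOfClosedCompl M hcompl.symm hNc hMc with hQdef
      have hQap : ∀ z : X, Q z = N.linearProjOfIsCompl M hcompl.symm z := fun z => by
        rw [hQdef, Submodule.coe_continuous_linearProjOfClosedCompl']; rfl
      -- Q commutes with T
      have hQT : ∀ z : X, Q (T z) = S (Q z) := by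
        intro z
        have hz : (M.linearProjOfIsCompl N hcompl z : X) + (N.linearProjOfIsCompl M hcompl.symm z : X) = z :=
          Submodule.projection_add_projection_eq_self hcompl z
        set p : X := (M.linearProjOfIsCompl N hcompl z : X) with hp
        set q : X := (N.linearProjOfIsCompl M hcompl.symm z : X) with hq'
        have hTz : T z = T p + T q := by rw [← map_add, hz]
        have hQp : Q (T p) = 0 := by
          rw [hQap]
          exact Submodule.projectionOnto_apply_of_mem_right hcompl.symm
            (hM p (M.linearProjOfIsCompl N hcompl z).2)
        have hQq : Q (T q) = ⟨T q, hN q (N.linearProjOfIsCompl M hcompl.symm z).2⟩ := by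
          rw [hQap]
          exact Submodule.linearProjOfIsCompl_apply_left hcompl.symm
            ⟨T q, hN q (N.linearProjOfIsCompl M hcompl.symm z).2⟩
        have hSQ : S (Q z) = ⟨T q, hN q (N.linearProjOfIsCompl M hcompl.symm z).2⟩ := by
          apply Subtype.ext
          have : Q z = N.linearProjOfIsCompl M hcompl.symm z := hQap z
          show T ((Q z : X)) = T q
          rw [this]
        rw [hTz, map_add, hQp, hQq, hSQ, zero_add]
      -- the sequence in N
      set v : ℕ → N := fun n => Q (u n) with hv
      have hSv : ∀ n, S (v (n + 1)) = v n := by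
        intro n
        rw [hv]
        show S (Q (u (n + 1))) = Q (u n)
        rw [← hQT, hTu]
      have hv0 : ∀ n, v 0 = (S ^ n) (v n) := by
        intro n
        induction n with
        | zero => simp
        | succ n ih =>
          rw [ih, pow_succ, ← hSv n]
          rfl
      -- norm estimate for v 0
      have hvn : ∀ n, ‖v n‖ ≤ ‖Q‖ * (c ^ n * ‖x‖) := by
        intro n
        calc ‖v n‖ ≤ ‖Q‖ * ‖u n‖ := Q.le_opNorm (u n)
          _ ≤ ‖Q‖ * (c ^ n * ‖x‖) := by
              exact mul_le_mul_of_nonneg_left (hnorm n) (norm_nonneg Q)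
      -- Gelfand: ‖S^n‖ eventually below (2c)⁻ⁿ
      have hg := spectrum.pow_nnnorm_pow_one_div_tendsto_nhds_spectralRadius S
      rw [hq] at hg
      set ε : ℝ≥0 := (Real.toNNReal c)⁻¹ / 2 with hε
      have hεpos : (0 : ℝ≥0∞) < (ε : ℝ≥0∞) := by
        rw [hε]
        simp only [ENNReal.coe_pos]
        have h0 : 0 < c.toNNReal := Real.toNNReal_pos.mpr hc
        positivity
      have hev : ∀ᶠ n : ℕ in atTop, (‖S ^ n‖₊ : ℝ≥0∞) ^ (1 / (n : ℝ)) < (ε : ℝ≥0∞) :=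
        hg.eventually_lt_const hεpos
      have hev2 : ∀ᶠ n : ℕ in atTop, ‖S ^ n‖ ≤ (ε : ℝ) ^ n := by
        filter_upwards [hev, eventually_ge_atTop 1] with n hn hn1
        have hne : (n : ℝ) ≠ 0 := Nat.cast_ne_zero.mpr (by omega)
        have h2 : ((‖S ^ n‖₊ : ℝ≥0∞) ^ (1 / (n : ℝ))) ^ (n : ℝ) ≤ ((ε : ℝ≥0∞)) ^ (n : ℝ) :=
          ENNReal.rpow_le_rpow hn.le (by positivity)
        rw [← ENNReal.rpow_mul, one_div, inv_mul_cancel₀ hne, ENNReal.rpow_one,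
          ENNReal.rpow_natCast, ← ENNReal.coe_pow, ENNReal.coe_le_coe] at h2
        calc ‖S ^ n‖ = (‖S ^ n‖₊ : ℝ) := rfl
          _ ≤ ((ε ^ n : ℝ≥0) : ℝ) := by exact_mod_cast h2
          _ = (ε : ℝ) ^ n := by push_cast; ring
      -- conclude ‖v 0‖ ≤ (1/2)^n * (‖Q‖ * ‖x‖) eventually
      have hεc : (ε : ℝ) * c = 1 / 2 := by
        rw [hε]
        push_cast
        rw [Real.coe_toNNReal c hc.le, div_mul_eq_mul_div, inv_mul_cancel₀ (ne_of_gt hc)]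
      have hbound : ∀ᶠ n : ℕ in atTop, ‖v 0‖ ≤ (1 / 2 : ℝ) ^ n * (‖Q‖ * ‖x‖) := by
        filter_upwards [hev2] with n hn
        have h1 : ‖v 0‖ ≤ ‖S ^ n‖ * ‖v n‖ := by
          rw [hv0 n]; exact (S ^ n).le_opNorm (v n)
        calc ‖v 0‖ ≤ ‖S ^ n‖ * ‖v n‖ := h1
          _ ≤ (ε : ℝ) ^ n * (‖Q‖ * (c ^ n * ‖x‖)) := by
              apply mul_le_mul hn (hvn n) (norm_nonneg _) (by positivity)
          _ = ((ε : ℝ) * c) ^ n * (‖Q‖ * ‖x‖) := by ring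
          _ = (1 / 2 : ℝ) ^ n * (‖Q‖ * ‖x‖) := by rw [hεc]
      have htend : Tendsto (fun n : ℕ => (1 / 2 : ℝ) ^ n * (‖Q‖ * ‖x‖)) atTop (𝓝 0) := by
        rw [show (0 : ℝ) = 0 * (‖Q‖ * ‖x‖) by ring]
        exact (tendsto_pow_atTop_nhds_zero_of_lt_one (by norm_num) (by norm_num)).mul_const _
      have hle : ‖v 0‖ ≤ 0 := ge_of_tendsto htend hbound
      have hv00 : v 0 = 0 := by
        rwa [norm_le_zero_iff] at hle
      -- hence x ∈ M
      have hz : (M.linearProjOfIsCompl N hcompl x : X) + (N.linearProjOfIsCompl M hcompl.symm x : X) = x :=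
        Submodule.projection_add_projection_eq_self hcompl x
      have hQx : N.linearProjOfIsCompl M hcompl.symm x = 0 := by
        rw [← hQap]
        have : Q (u 0) = 0 := hv00
        rwa [hu0] at this
      rw [hQx] at hz
      simp only [Submodule.coe_zero, add_zero] at hz
      rw [← hz]
      exact (M.linearProjOfIsCompl N hcompl x).2
  exact ⟨hMK, by rw [← hMK]; exact hMc⟩
end

section
/- Let X be a complex Banach space and T a bounded linear operator on X. T is quasinilpotent if and only if H₀(T) = X. -/
open Filter Topology
open scoped ENNReal NNReal

/-- T is quasinilpotent iff its quasinilpotent part is the whole space. -/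
theorem stmt_16 {X : Type*} [NormedAddCommGroup X] [NormedSpace ℂ X] [CompleteSpace X]
    (T : X →L[ℂ] X) :
    spectralRadius ℂ T = 0 ↔ H0 T = Set.univ := by
  constructor
  · intro hr
    apply Set.eq_univ_of_forall
    intro x
    have h1 := spectrum.pow_norm_pow_one_div_tendsto_nhds_spectralRadius T
    rw [hr] at h1
    have h2 : Tendsto (fun n : ℕ => ‖T ^ n‖ ^ (1 / (n : ℝ))) atTop (𝓝 0) := by
      have h3 := (ENNReal.tendsto_toReal (by simp : (0 : ℝ≥0∞) ≠ ⊤)).comp h1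
      simp only [Function.comp_def, ENNReal.toReal_zero] at h3
      exact h3.congr fun n => ENNReal.toReal_ofReal (by positivity)
    set C := max ‖x‖ 1 with hCdef
    have hC0 : (0 : ℝ) < C := lt_of_lt_of_le one_pos (le_max_right _ _)
    have hc : Tendsto (fun n : ℕ => C ^ (1 / (n : ℝ))) atTop (𝓝 1) := by
      have := (Real.continuousAt_const_rpow (a := C) (b := 0) hC0.ne').tendsto.comp
        tendsto_one_div_atTop_nhds_zero_nat
      simpa [Function.comp_def, Real.rpow_zero] using this
    have hmul := h2.mul hc
    rw [zero_mul] at hmul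
    refine squeeze_zero (fun n => Real.rpow_nonneg (norm_nonneg _) _) (fun n => ?_) hmul
    rw [← Real.mul_rpow (norm_nonneg _) hC0.le]
    refine Real.rpow_le_rpow (norm_nonneg _) ?_ (by positivity)
    calc ‖(T ^ n) x‖ ≤ ‖T ^ n‖ * ‖x‖ := (T ^ n).le_opNorm x
      _ ≤ ‖T ^ n‖ * C := by gcongr; exact le_max_left _ _
  · intro hH
    refine le_antisymm ?_ zero_le
    refine ENNReal.le_of_forall_pos_le_add fun ε hε _ => ?_
    rw [zero_add]
    set e : ℝ := (ε : ℝ) / 2 with hedef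
    have he : (0 : ℝ) < e := by positivity
    have key : ∀ x : X, ∃ C, ∀ n : ℕ, ‖((((e : ℂ))⁻¹ • T) ^ n) x‖ ≤ C := by
      intro x
      have hx : x ∈ H0 T := by rw [hH]; trivial
      simp only [H0, Set.mem_setOf_eq] at hx
      have hev : ∀ᶠ n : ℕ in atTop, ‖((((e : ℂ))⁻¹ • T) ^ n) x‖ ≤ 1 := by
        filter_upwards [hx.eventually_lt_const he, eventually_ge_atTop 1] with n hn hn1
        have hn0 : n ≠ 0 := by omega
        have hTx : ‖(T ^ n) x‖ ≤ e ^ n := by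
          have : (‖(T ^ n) x‖ ^ (1 / (n : ℝ))) ^ n ≤ e ^ n :=
            pow_le_pow_left₀ (Real.rpow_nonneg (norm_nonneg _) _) hn.le n
          rwa [one_div, Real.rpow_inv_natCast_pow (norm_nonneg _) hn0] at this
        rw [smul_pow, ContinuousLinearMap.smul_apply, norm_smul, norm_pow, norm_inv,
          Complex.norm_real, Real.norm_of_nonneg he.le]
        calc (e⁻¹) ^ n * ‖(T ^ n) x‖ ≤ (e⁻¹) ^ n * e ^ n := by
              gcongr
          _ = 1 := by rw [← mul_pow, inv_mul_cancel₀ he.ne', one_pow]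
      obtain ⟨N, hN⟩ := eventually_atTop.mp hev
      refine ⟨1 + ∑ i ∈ Finset.range N, ‖((((e : ℂ))⁻¹ • T) ^ i) x‖, fun n => ?_⟩
      rcases lt_or_ge n N with h | h
      · refine le_trans (Finset.single_le_sum
          (f := fun i => ‖((((e : ℂ))⁻¹ • T) ^ i) x‖)
          (fun i _ => norm_nonneg _) (Finset.mem_range.mpr h)) ?_
        exact le_add_of_nonneg_left zero_le_one
      · exact le_trans (hN n h) (le_add_of_nonneg_right
          (Finset.sum_nonneg fun i _ => norm_nonneg _))
    obtain ⟨C, hC⟩ := banach_steinhaus key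
    have hC0 : (0 : ℝ) ≤ C := le_trans (norm_nonneg _) (hC 0)
    have hTn : ∀ n : ℕ, ‖T ^ n‖ ≤ C * e ^ n := by
      intro n
      have h := hC n
      rw [smul_pow, norm_smul (((e : ℂ))⁻¹ ^ n) (T ^ n), norm_pow, norm_inv,
        Complex.norm_real, Real.norm_of_nonneg he.le, inv_pow,
        inv_mul_le_iff₀ (by positivity : (0:ℝ) < e ^ n)] at h
      exact h.trans_eq (mul_comm _ _)
    have hge := spectrum.pow_nnnorm_pow_one_div_tendsto_nhds_spectralRadius T
    refine le_of_tendsto hge ?_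
    filter_upwards [ENNReal.eventually_pow_one_div_le
      (x := ENNReal.ofReal C) ENNReal.ofReal_ne_top (by norm_num : (1:ℝ≥0∞) < 2),
      eventually_ge_atTop 1] with n hn hn1
    have hn0 : ((n : ℝ)) ≠ 0 := by positivity
    calc (‖T ^ n‖₊ : ℝ≥0∞) ^ (1 / (n : ℝ))
        ≤ (ENNReal.ofReal (C * e ^ n)) ^ (1 / (n : ℝ)) := by
          refine ENNReal.rpow_le_rpow ?_ (by positivity)
          rw [← ENNReal.ofReal_coe_nnreal, coe_nnnorm]
          exact ENNReal.ofReal_le_ofReal (hTn n)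
      _ = (ENNReal.ofReal C) ^ (1 / (n : ℝ)) * (ENNReal.ofReal e) := by
          rw [ENNReal.ofReal_mul hC0, ENNReal.ofReal_pow he.le,
            ENNReal.mul_rpow_of_nonneg _ _ (by positivity), ← ENNReal.rpow_natCast,
            ← ENNReal.rpow_mul, mul_one_div, div_self hn0, ENNReal.rpow_one]
      _ ≤ 2 * ENNReal.ofReal e := mul_le_mul_left hn _
      _ = (ε : ℝ≥0∞) := by
          rw [show (2 : ℝ≥0∞) = ENNReal.ofReal 2 from (ENNReal.ofReal_ofNat 2).symm,
            ← ENNReal.ofReal_mul (by norm_num), hedef]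
          rw [show (2:ℝ) * ((ε:ℝ)/2) = (ε:ℝ) by ring, ENNReal.ofReal_coe_nnreal]
end

section
/- Let X be a complex Banach space and T a bounded linear operator such that X = M ⊕ N for closed T-invariant subspaces with T_M invertible and T_N quasinilpotent. Then the projection P onto N along M commutes with T, T + P is invertible, and TP is quasinilpotent. -/
open Filter Topology
open scoped ENNReal

lemma clmRestrict_coe {X : Type*} [NormedAddCommGroup X] [NormedSpace ℂ X]
    (T : X →L[ℂ] X) (M : Submodule ℂ X) (h : ∀ x ∈ M, T x ∈ M) (x : M) :
    (clmRestrict T M h x : X) = T x := rfl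

lemma bij_of_restrict {X : Type*} [NormedAddCommGroup X] [NormedSpace ℂ X]
    (S : X →L[ℂ] X) (M N : Submodule ℂ X) (hcompl : IsCompl M N)
    (hSM : ∀ x ∈ M, S x ∈ M) (hSN : ∀ x ∈ N, S x ∈ N)
    (hbM : Function.Bijective (clmRestrict S M hSM))
    (hbN : Function.Bijective (clmRestrict S N hSN)) :
    Function.Bijective S := by
  have decomp : ∀ x : X, ∃ m ∈ M, ∃ n ∈ N, m + n = x := by
    intro x
    have hx : x ∈ M ⊔ N := by rw [hcompl.sup_eq_top]; trivial
    exact Submodule.mem_sup.mp hx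
  constructor
  · have key : ∀ x : X, S x = 0 → x = 0 := by
      intro x hx
      obtain ⟨m, hm, n, hn, rfl⟩ := decomp x
      have hsum : S m + S n = 0 := by rw [← map_add, hx]
      have hSm : S m = 0 := by
        have h1 : S m ∈ M := hSM m hm
        have h2 : S m ∈ N := by
          have heq : S m = -S n := eq_neg_of_add_eq_zero_left hsum
          rw [heq]
          exact N.neg_mem (hSN n hn)
        exact (Submodule.disjoint_def.mp hcompl.disjoint) _ h1 h2
      have hSn : S n = 0 := by rwa [hSm, zero_add] at hsum
      have hm0 : m = 0 := by
        have := hbM.injective (a₁ := ⟨m, hm⟩) (a₂ := 0)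
          (Subtype.ext (by simpa [clmRestrict_coe] using hSm))
        simpa using congrArg Subtype.val this
      have hn0 : n = 0 := by
        have := hbN.injective (a₁ := ⟨n, hn⟩) (a₂ := 0)
          (Subtype.ext (by simpa [clmRestrict_coe] using hSn))
        simpa using congrArg Subtype.val this
      rw [hm0, hn0, add_zero]
    intro a b hab
    have : S (a - b) = 0 := by rw [map_sub, hab, sub_self]
    have h0 := key _ this
    exact sub_eq_zero.mp h0
  · intro y
    obtain ⟨m, hm, n, hn, rfl⟩ := decomp y
    obtain ⟨m', hm'⟩ := hbM.surjective ⟨m, hm⟩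
    obtain ⟨n', hn'⟩ := hbN.surjective ⟨n, hn⟩
    refine ⟨(m' : X) + (n' : X), ?_⟩
    have h1 : S (m' : X) = m := congrArg Subtype.val hm'
    have h2 : S (n' : X) = n := congrArg Subtype.val hn'
    rw [map_add, h1, h2]

lemma isUnit_of_bijective {X : Type*} [NormedAddCommGroup X] [NormedSpace ℂ X] [CompleteSpace X]
    (S : X →L[ℂ] X) (h : Function.Bijective S) : IsUnit S := by
  let e := ContinuousLinearEquiv.ofBijective S (LinearMap.ker_eq_bot.mpr h.1)
    (LinearMap.range_eq_top.mpr h.2)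
  have hcoe : ∀ y, e y = S y := fun y => rfl
  refine ⟨⟨S, (e.symm : X →L[ℂ] X), ?_, ?_⟩, rfl⟩
  · ext x
    simp only [ContinuousLinearMap.mul_apply, ContinuousLinearMap.coe_coe,
      ContinuousLinearMap.one_apply]
    rw [← hcoe]
    exact e.apply_symm_apply x
  · ext x
    simp only [ContinuousLinearMap.mul_apply, ContinuousLinearMap.coe_coe,
      ContinuousLinearMap.one_apply]
    rw [← hcoe]
    exact e.symm_apply_apply x

lemma bijective_of_isUnit {Y : Type*} [NormedAddCommGroup Y] [NormedSpace ℂ Y]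
    (f : Y →L[ℂ] Y) (h : IsUnit f) : Function.Bijective f := by
  obtain ⟨u, rfl⟩ := h
  refine Function.bijective_iff_has_inverse.mpr ⟨(↑u⁻¹ : Y →L[ℂ] Y), ?_, ?_⟩
  · intro x
    have := DFunLike.congr_fun u.inv_mul x
    simpa only [ContinuousLinearMap.mul_apply, ContinuousLinearMap.one_apply] using this
  · intro x
    have := DFunLike.congr_fun u.mul_inv x
    simpa only [ContinuousLinearMap.mul_apply, ContinuousLinearMap.one_apply] using this

set_option maxHeartbeats 1600000 in
/-- If T_M is invertible and T_N quasinilpotent, then the projection P onto N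
along M commutes with T, T + P is invertible and TP is quasinilpotent. -/
theorem stmt_17 {X : Type*} [NormedAddCommGroup X] [NormedSpace ℂ X] [CompleteSpace X]
    (T : X →L[ℂ] X) (M N : Submodule ℂ X)
    (hMc : IsClosed (M : Set X)) (hNc : IsClosed (N : Set X))
    (hM : ∀ x ∈ M, T x ∈ M) (hN : ∀ x ∈ N, T x ∈ N)
    (hcompl : IsCompl M N)
    (hinv : Function.Bijective (clmRestrict T M hM))
    (hq : spectralRadius ℂ (clmRestrict T N hN) = 0)
    (P : X →L[ℂ] X) (hP : P * P = P)
    (hker : LinearMap.ker (P : X →ₗ[ℂ] X) = M) (hran : LinearMap.range (P : X →ₗ[ℂ] X) = N) :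
    T * P = P * T ∧ IsUnit (T + P) ∧ spectralRadius ℂ (T * P) = 0 := by
  -- Basic facts about the projection P
  have hPmem : ∀ x : X, P x ∈ N := by
    intro x
    rw [← hran]
    exact LinearMap.mem_range_self _ x
  have hPN : ∀ x ∈ N, P x = x := by
    intro x hx
    rw [← hran] at hx
    obtain ⟨y, rfl⟩ := hx
    have := DFunLike.congr_fun hP y
    simpa only [ContinuousLinearMap.mul_apply, ContinuousLinearMap.coe_coe] using this
  have hPM : ∀ x ∈ M, P x = 0 := by
    intro x hx
    rw [← hker] at hx
    exact LinearMap.mem_ker.mp hx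
  have hsub : ∀ x : X, x - P x ∈ M := by
    intro x
    rw [← hker]
    exact LinearMap.mem_ker.mpr (by rw [map_sub, ContinuousLinearMap.coe_coe, hPN _ (hPmem x), sub_self])
  -- k - T_N is invertible for every nonzero k
  have hnot : ∀ k : ℂ, k ≠ 0 → IsUnit (algebraMap ℂ (↥N →L[ℂ] ↥N) k - clmRestrict T N hN) := by
    intro k hk0
    rw [← spectrum.notMem_iff]
    intro hmem
    have hle : (‖k‖₊ : ℝ≥0∞) ≤ spectralRadius ℂ (clmRestrict T N hN) :=
      le_iSup₂ (α := ℝ≥0∞) k hmem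
    rw [hq] at hle
    simp only [nonpos_iff_eq_zero, ENNReal.coe_eq_zero, nnnorm_eq_zero] at hle
    exact hk0 hle
  -- Part 1: commutation
  have hcomm : T * P = P * T := by
    ext x
    simp only [ContinuousLinearMap.mul_apply]
    have hx : T x = T (x - P x) + T (P x) := by rw [← map_add]; congr 1; abel
    rw [hx, map_add, hPM _ (hM _ (hsub x)), hPN _ (hN _ (hPmem x)), zero_add]
  refine ⟨hcomm, ?_, ?_⟩
  -- Part 2: T + P is invertible
  · have hSM2 : ∀ x ∈ M, (T + P) x ∈ M := by
      intro x hx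
      rw [ContinuousLinearMap.add_apply, hPM x hx, add_zero]
      exact hM x hx
    have hSN2 : ∀ x ∈ N, (T + P) x ∈ N := by
      intro x hx
      rw [ContinuousLinearMap.add_apply, hPN x hx]
      exact N.add_mem (hN x hx) hx
    have heqM : clmRestrict (T + P) M hSM2 = clmRestrict T M hM := by
      ext x
      show (T + P) (x : X) = T (x : X)
      rw [ContinuousLinearMap.add_apply, hPM _ x.2, add_zero]
    have heqN : clmRestrict (T + P) N hSN2 = clmRestrict T N hN + 1 := by
      ext x
      show (T + P) (x : X) = ((clmRestrict T N hN x + x : N) : X)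
      rw [ContinuousLinearMap.add_apply, hPN _ x.2]
      rfl
    have hUnit : IsUnit (clmRestrict T N hN + 1) := by
      have h1 : IsUnit (algebraMap ℂ (↥N →L[ℂ] ↥N) (-1) - clmRestrict T N hN) :=
        hnot (-1) (by norm_num)
      have h2 : algebraMap ℂ (N →L[ℂ] N) (-1) - clmRestrict T N hN
          = -(clmRestrict T N hN + 1) := by
        rw [Algebra.algebraMap_eq_smul_one, neg_smul, one_smul]
        abel
      rw [h2] at h1
      simpa using h1.neg
    have hbM2 : Function.Bijective (clmRestrict (T + P) M hSM2) := by
      rw [heqM]; exact hinv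
    have hbN2 : Function.Bijective (clmRestrict (T + P) N hSN2) := by
      rw [heqN]; exact bijective_of_isUnit _ hUnit
    exact isUnit_of_bijective _ (bij_of_restrict _ M N hcompl hSM2 hSN2 hbM2 hbN2)
  -- Part 3: T * P is quasinilpotent
  · have hspec : ∀ k : ℂ, k ∈ spectrum ℂ (T * P) → k = 0 := by
      intro k hk
      by_contra hk0
      set S := algebraMap ℂ (X →L[ℂ] X) k - T * P with hS
      have hSval : ∀ x : X, S x = k • x - T (P x) := by
        intro x
        simp [hS, ContinuousLinearMap.sub_apply, ContinuousLinearMap.mul_apply,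
          Algebra.algebraMap_eq_smul_one, ContinuousLinearMap.smul_apply]
      have hSM3 : ∀ x ∈ M, S x ∈ M := by
        intro x hx
        rw [hSval, hPM x hx, map_zero, sub_zero]
        exact M.smul_mem k hx
      have hSN3 : ∀ x ∈ N, S x ∈ N := by
        intro x hx
        rw [hSval, hPN x hx]
        exact N.sub_mem (N.smul_mem k hx) (hN x hx)
      have heqM3 : clmRestrict S M hSM3 = algebraMap ℂ (M →L[ℂ] M) k := by
        ext x
        show S (x : X) = ((algebraMap ℂ (M →L[ℂ] M) k x : M) : X)
        rw [hSval, hPM _ x.2, map_zero, sub_zero]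
        simp [Algebra.algebraMap_eq_smul_one, ContinuousLinearMap.smul_apply]
      have heqN3 : clmRestrict S N hSN3
          = algebraMap ℂ (N →L[ℂ] N) k - clmRestrict T N hN := by
        ext x
        show S (x : X) = (((algebraMap ℂ (N →L[ℂ] N) k - clmRestrict T N hN) x : N) : X)
        rw [hSval, hPN _ x.2]
        simp [Algebra.algebraMap_eq_smul_one, ContinuousLinearMap.sub_apply,
          ContinuousLinearMap.smul_apply]
        rfl
      have hbM3 : Function.Bijective (clmRestrict S M hSM3) := by
        rw [heqM3]
        exact bijective_of_isUnit _ ((isUnit_iff_ne_zero.mpr hk0).map (algebraMap ℂ (M →L[ℂ] M)))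
      have hbN3 : Function.Bijective (clmRestrict S N hSN3) := by
        rw [heqN3]
        exact bijective_of_isUnit _ (hnot k hk0)
      have : IsUnit S :=
        isUnit_of_bijective _ (bij_of_restrict _ M N hcompl hSM3 hSN3 hbM3 hbN3)
      exact (spectrum.notMem_iff.mpr this) hk
    refine le_antisymm ?_ zero_le
    rw [spectralRadius]
    apply iSup₂_le
    intro k hk
    rw [hspec k hk]
    simp
end

section
/- Let X be a complex Banach space and T a bounded linear operator on X. Suppose there exists a bounded projection P commuting with T such that T + P is invertible and TP is quasinilpotent. Then 0 is not an accumulation point of the spectrum of T: there exists ε > 0 such that T − λ is invertible for all λ with 0 < |λ| < ε. -/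
open Filter Topology

/-- If there is a projection P commuting with T with T + P invertible and TP
quasinilpotent, then 0 is not an accumulation point of the spectrum of T. -/
theorem stmt_18 {X : Type*} [NormedAddCommGroup X] [NormedSpace ℂ X] [CompleteSpace X]
    (T P : X →L[ℂ] X) (hP : P * P = P) (hcomm : T * P = P * T)
    (hinv : IsUnit (T + P)) (hq : spectralRadius ℂ (T * P) = 0) :
    ∃ ε > (0 : ℝ), ∀ l : ℂ, 0 < ‖l‖ → ‖l‖ < ε →
      IsUnit (T - l • (1 : X →L[ℂ] X)) := by
  have hopen : IsOpen { x : X →L[ℂ] X | IsUnit x } := Units.isOpen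
  rw [Metric.isOpen_iff] at hopen
  obtain ⟨ε, hε, hball⟩ := hopen (T + P) hinv
  refine ⟨ε, hε, fun l hl hlε => ?_⟩
  have hl0 : l ≠ 0 := by simpa using hl.ne'
  -- T + P - l • 1 is a unit
  have hu1 : IsUnit (T + P - l • (1 : X →L[ℂ] X)) := by
    apply hball
    rw [Metric.mem_ball, dist_eq_norm, sub_sub_cancel_left, norm_neg]
    calc ‖l • (1 : X →L[ℂ] X)‖ ≤ ‖l‖ * ‖(1 : X →L[ℂ] X)‖ := norm_smul_le l (1 : X →L[ℂ] X)
      _ ≤ ‖l‖ * 1 := by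
          gcongr
          rw [ContinuousLinearMap.one_def]
          exact ContinuousLinearMap.norm_id_le
      _ < ε := by simpa using hlε
  -- T * P - l • 1 is a unit, since T * P is quasinilpotent
  have hu2 : IsUnit (T * P - l • (1 : X →L[ℂ] X)) := by
    have hmem : l ∈ resolventSet ℂ (T * P) := by
      apply spectrum.mem_resolventSet_of_spectralRadius_lt
      rw [hq]
      exact_mod_cast (show (0 : NNReal) < ‖l‖₊ by simpa [pos_iff_ne_zero] using hl0)
    rw [resolventSet, Set.mem_setOf_eq] at hmem
    have h' : algebraMap ℂ (X →L[ℂ] X) l - T * P = -(T * P - l • (1 : X →L[ℂ] X)) := by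
      rw [Algebra.algebraMap_eq_smul_one, neg_sub]
    rw [h'] at hmem
    simpa using hmem.neg
  -- basic commutation facts
  have hPT : Commute P T := hcomm.symm
  have hc2 : Commute (T * P - l • (1 : X →L[ℂ] X)) P :=
    Commute.sub_left (Commute.mul_left hPT.symm rfl) ((Commute.one_left P).smul_left l)
  have hcTl : Commute T (l • (1 : X →L[ℂ] X)) := (Commute.one_right T).smul_right l
  have hcPl : Commute P (l • (1 : X →L[ℂ] X)) := (Commute.one_right P).smul_right l
  have hcll : Commute (l • (1 : X →L[ℂ] X)) (l • (1 : X →L[ℂ] X)) := Commute.refl _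
  have hc2T : Commute (T * P - l • (1 : X →L[ℂ] X)) (T - l • (1 : X →L[ℂ] X)) := by
    apply Commute.sub_left
    · exact Commute.sub_right (Commute.mul_left rfl hPT) ((hcTl.mul_left hcPl.symm.symm))
    · exact Commute.sub_right hcTl.symm hcll
  have hc1 : Commute (T + P - l • (1 : X →L[ℂ] X)) P :=
    Commute.sub_left (Commute.add_left hPT.symm rfl) ((Commute.one_left P).smul_left l)
  have hc1T : Commute (T + P - l • (1 : X →L[ℂ] X)) (T - l • (1 : X →L[ℂ] X)) := by
    apply Commute.sub_left
    · exact Commute.sub_right (Commute.add_left rfl hPT) (hcTl.add_left hcPl)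
    · exact Commute.sub_right hcTl.symm hcll
  set R : X →L[ℂ] X := ↑hu2.unit⁻¹ with hR
  set S : X →L[ℂ] X := ↑hu1.unit⁻¹ with hS
  have hRdef' : R * (T * P - l • (1 : X →L[ℂ] X)) = 1 := hu2.unit.inv_mul
  have hSdef' : S * (T + P - l • (1 : X →L[ℂ] X)) = 1 := hu1.unit.inv_mul
  have hcR : Commute R P := hc2.units_inv_left (u := hu2.unit)
  have hcRT : Commute R (T - l • (1 : X →L[ℂ] X)) := hc2T.units_inv_left (u := hu2.unit)
  have hcS : Commute S P := hc1.units_inv_left (u := hu1.unit)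
  have hcST : Commute S (T - l • (1 : X →L[ℂ] X)) := hc1T.units_inv_left (u := hu1.unit)
  set Q : X →L[ℂ] X := 1 - P with hQ
  have hPQ : P * Q = 0 := by rw [hQ, mul_sub, mul_one, hP, sub_self]
  -- key computations
  have key1 : (T - l • (1 : X →L[ℂ] X)) * (R * P) = P := by
    have h1 : (T - l • (1 : X →L[ℂ] X)) * P = (T * P - l • (1 : X →L[ℂ] X)) * P := by
      rw [sub_mul, sub_mul, mul_assoc, hP, smul_mul_assoc]
    calc (T - l • (1 : X →L[ℂ] X)) * (R * P)
        = R * ((T - l • (1 : X →L[ℂ] X)) * P) := by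
          rw [← mul_assoc, ← hcRT.eq, mul_assoc]
      _ = (R * (T * P - l • (1 : X →L[ℂ] X))) * P := by rw [h1, mul_assoc]
      _ = P := by rw [hRdef', one_mul]
  have key2 : (T - l • (1 : X →L[ℂ] X)) * (S * Q) = Q := by
    have h1 : (T - l • (1 : X →L[ℂ] X)) * Q = (T + P - l • (1 : X →L[ℂ] X)) * Q := by
      rw [sub_mul, sub_mul, add_mul, hPQ, add_zero]
    calc (T - l • (1 : X →L[ℂ] X)) * (S * Q)
        = S * ((T - l • (1 : X →L[ℂ] X)) * Q) := by
          rw [← mul_assoc, ← hcST.eq, mul_assoc]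
      _ = (S * (T + P - l • (1 : X →L[ℂ] X))) * Q := by rw [h1, mul_assoc]
      _ = Q := by rw [hSdef', one_mul]
  have hmul : (T - l • (1 : X →L[ℂ] X)) * (R * P + S * Q) = 1 := by
    rw [mul_add, key1, key2, hQ]; abel
  -- commuting gives the other side
  have hcTP : Commute (T - l • (1 : X →L[ℂ] X)) P :=
    Commute.sub_left hPT.symm ((Commute.one_left P).smul_left l)
  have hcTQ : Commute (T - l • (1 : X →L[ℂ] X)) Q :=
    Commute.sub_right (Commute.one_right _) hcTP
  have hcomm' : Commute (T - l • (1 : X →L[ℂ] X)) (R * P + S * Q) :=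
    Commute.add_right (Commute.mul_right hcRT.symm hcTP) (Commute.mul_right hcST.symm hcTQ)
  have hmul' : (R * P + S * Q) * (T - l • (1 : X →L[ℂ] X)) = 1 := by
    rw [← hcomm'.eq]; exact hmul
  exact ⟨⟨T - l • (1 : X →L[ℂ] X), R * P + S * Q, hmul, hmul'⟩, rfl⟩
end
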